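/- Let r, s, m be natural numbers and l a positive integer. In the polynomial ring R = ℂ[x_1,…,x_r, y_1,…,y_s], let I be the ideal generated by all the variables x_1,…,x_r,y_1,…,y_s and let J be the ideal generated by all products x_i·y_j (1 ≤ i ≤ r, 1 ≤ j ≤ s). If f is weighted homogeneous of weighted degree 0 for the ℤ-weighting in which each x_i has weight l and each y_j has weight −l, then f ∈ I^{2m} if and only if f ∈ J^{m}. -/

import Mathlib

open MvPolynomial

section Aux

variable {σ : Type*} {R : Type*} [CommSemiring R]

/-- Powers of the ideal of variables lie in the span of high-degree monomials. -/
lemma aux_pow_le (n : ℕ) :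
    (Ideal.span (Set.range (X : σ → MvPolynomial σ R))) ^ n ≤
      Ideal.span ((fun d => monomial d (1 : R)) '' {d : σ →₀ ℕ | n ≤ d.sum fun _ k => k}) := by
  induction n with
  | zero =>
    rw [pow_zero, Ideal.one_eq_top, top_le_iff, Ideal.eq_top_iff_one]
    apply Ideal.subset_span
    exact ⟨0, by simp, by simp⟩
  | succ n ih =>
    rw [pow_succ]
    calc (Ideal.span (Set.range (X : σ → MvPolynomial σ R))) ^ n *
          Ideal.span (Set.range (X : σ → MvPolynomial σ R))
        ≤ Ideal.span ((fun d => monomial d (1 : R)) '' {d : σ →₀ ℕ | n ≤ d.sum fun _ k => k}) *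
          Ideal.span (Set.range (X : σ → MvPolynomial σ R)) := Ideal.mul_mono_left ih
      _ ≤ _ := by
          rw [Ideal.span_mul_span]
          apply Ideal.span_le.2
          intro x hx
          simp only [Set.mem_mul, Set.mem_iUnion, Set.mem_singleton_iff, Set.mem_image,
            Set.mem_setOf_eq, Set.mem_range] at hx
          obtain ⟨_, ⟨⟨d, hd, rfl⟩, _, ⟨⟨i, rfl⟩, rfl⟩⟩⟩ := hx
          apply Ideal.subset_span
          refine ⟨d + Finsupp.single i 1, ?_, ?_⟩
          · simp only [Set.mem_setOf_eq]
            rw [Finsupp.sum_add_index' (fun _ => rfl) (fun _ _ _ => rfl)]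
            have h1 : ((Finsupp.single i 1 : σ →₀ ℕ).sum fun _ k => k) = 1 := by
              simp [Finsupp.sum_single_index]
            omega
          · rw [X, monomial_mul, mul_one]

end Aux

/-- In `R = ℂ[x_1,…,x_r, y_1,…,y_s]`, let `I` be the ideal generated by all the
variables and `J` the ideal generated by all products `x_i * y_j`. If `f` is
weighted homogeneous of weighted degree `0` for the weighting `w(x_i) = l`,
`w(y_j) = -l` (with `l > 0`), then `f ∈ I^(2m) ↔ f ∈ J^m`. -/
theorem stmt_5 (r s m : ℕ) (l : ℤ) (hl : 0 < l)
    (w : Fin r ⊕ Fin s → ℤ)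
    (hwx : ∀ i : Fin r, w (Sum.inl i) = l)
    (hwy : ∀ j : Fin s, w (Sum.inr j) = -l)
    (I J : Ideal (MvPolynomial (Fin r ⊕ Fin s) ℂ))
    (hI : I = Ideal.span (Set.range X))
    (hJ : J = Ideal.span
      {p : MvPolynomial (Fin r ⊕ Fin s) ℂ |
        ∃ (i : Fin r) (j : Fin s), p = X (Sum.inl i) * X (Sum.inr j)})
    (f : MvPolynomial (Fin r ⊕ Fin s) ℂ)
    (hf : f.IsWeightedHomogeneous w 0) :
    f ∈ I ^ (2 * m) ↔ f ∈ J ^ m := by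
  subst hI hJ
  constructor
  · intro hfI
    -- key monomial lemma
    have key : ∀ (k : ℕ) (d : (Fin r ⊕ Fin s) →₀ ℕ) (c : ℂ),
        k ≤ ∑ i : Fin r, d (Sum.inl i) → k ≤ ∑ j : Fin s, d (Sum.inr j) →
        monomial d c ∈ (Ideal.span
          {p : MvPolynomial (Fin r ⊕ Fin s) ℂ |
            ∃ (i : Fin r) (j : Fin s), p = X (Sum.inl i) * X (Sum.inr j)}) ^ k := by
      intro k
      induction k with
      | zero => intro d c _ _; simp
      | succ k ih =>
        intro d c hA hB
        obtain ⟨i, hi⟩ : ∃ i : Fin r, 1 ≤ d (Sum.inl i) := by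
          by_contra h
          push_neg at h
          have : ∑ i : Fin r, d (Sum.inl i) = 0 :=
            Finset.sum_eq_zero fun i _ => by have := h i; omega
          omega
        obtain ⟨j, hj⟩ : ∃ j : Fin s, 1 ≤ d (Sum.inr j) := by
          by_contra h
          push_neg at h
          have : ∑ j : Fin s, d (Sum.inr j) = 0 :=
            Finset.sum_eq_zero fun j _ => by have := h j; omega
          omega
        have hle : (Finsupp.single (Sum.inl i) 1 + Finsupp.single (Sum.inr j) 1 :
            (Fin r ⊕ Fin s) →₀ ℕ) ≤ d := by
          rw [Finsupp.le_def]
          intro a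
          rcases a with a | a
          · simp only [Finsupp.add_apply, Finsupp.single_apply]
            rcases eq_or_ne i a with rfl | h
            · simpa using hi
            · simp [h]
          · simp only [Finsupp.add_apply, Finsupp.single_apply]
            rcases eq_or_ne j a with rfl | h
            · simpa using hj
            · simp [h]
        set d' : (Fin r ⊕ Fin s) →₀ ℕ :=
          d - (Finsupp.single (Sum.inl i) 1 + Finsupp.single (Sum.inr j) 1) with hd'
        have hdd : d' + Finsupp.single (Sum.inl i) 1 + Finsupp.single (Sum.inr j) 1 = d := by
          rw [hd', add_assoc, tsub_add_cancel_of_le hle]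
        have hA' : k ≤ ∑ i' : Fin r, d' (Sum.inl i') := by
          have : ∑ i' : Fin r, d (Sum.inl i') =
              (∑ i' : Fin r, d' (Sum.inl i')) + 1 := by
            rw [← hdd]
            simp [Finsupp.add_apply, Finsupp.single_apply, Finset.sum_add_distrib,
              Finset.sum_ite_eq]
          omega
        have hB' : k ≤ ∑ j' : Fin s, d' (Sum.inr j') := by
          have : ∑ j' : Fin s, d (Sum.inr j') =
              (∑ j' : Fin s, d' (Sum.inr j')) + 1 := by
            rw [← hdd]
            simp [Finsupp.add_apply, Finsupp.single_apply, Finset.sum_add_distrib,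
              Finset.sum_ite_eq]
          omega
        have heq : monomial d c =
            monomial d' c * (X (Sum.inl i) * X (Sum.inr j)) := by
          rw [X, X, monomial_mul, monomial_mul, mul_one, mul_one, ← add_assoc, hdd]
        rw [heq, pow_succ]
        exact Ideal.mul_mem_mul (ih d' c hA' hB')
          (Ideal.subset_span ⟨i, j, rfl⟩)
    -- every monomial of f has large x- and y-degree
    have hdeg : ∀ d ∈ f.support, m ≤ ∑ i : Fin r, d (Sum.inl i) ∧
        m ≤ ∑ j : Fin s, d (Sum.inr j) := by
      intro d hd
      have h2 := (aux_pow_le (σ := Fin r ⊕ Fin s) (R := ℂ) (2 * m)) hfI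
      rw [mem_ideal_span_monomial_image] at h2
      obtain ⟨d', hd'sum, hd'le⟩ := h2 d hd
      have hsum : 2 * m ≤ ∑ a : Fin r ⊕ Fin s, d a := by
        have e1 : (d'.sum fun _ k => k) = ∑ a : Fin r ⊕ Fin s, d' a :=
          Finsupp.sum_fintype _ _ (fun _ => rfl)
        have e2 : ∑ a : Fin r ⊕ Fin s, d' a ≤ ∑ a : Fin r ⊕ Fin s, d a :=
          Finset.sum_le_sum fun a _ => hd'le a
        simp only [Set.mem_setOf_eq, e1] at hd'sum
        omega
      rw [Fintype.sum_sum_type] at hsum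
      -- weighted homogeneity gives equality of x-degree and y-degree
      have hw : (Finsupp.weight w) d = 0 := hf (mem_support_iff.1 hd)
      rw [Finsupp.weight_apply, Finsupp.sum_fintype _ _ (fun a => zero_smul ℕ (w a))] at hw
      rw [Fintype.sum_sum_type] at hw
      simp only [hwx, hwy, smul_eq_mul, nsmul_eq_mul] at hw
      have hw' : ((∑ i : Fin r, d (Sum.inl i) : ℕ) : ℤ) * l -
          ((∑ j : Fin s, d (Sum.inr j) : ℕ) : ℤ) * l = 0 := by
        push_cast
        rw [Finset.sum_mul, Finset.sum_mul]
        have : ∑ j : Fin s, (d (Sum.inr j) : ℤ) * -l =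
            -∑ j : Fin s, (d (Sum.inr j) : ℤ) * l := by
          rw [← Finset.sum_neg_distrib]
          exact Finset.sum_congr rfl fun j _ => by ring
        rw [this] at hw
        linarith [hw]
      have hAB : (∑ i : Fin r, d (Sum.inl i)) = ∑ j : Fin s, d (Sum.inr j) := by
        rw [← sub_mul, mul_eq_zero] at hw'
        rcases hw' with h | h
        · exact_mod_cast sub_eq_zero.1 (by linarith [h] : ((∑ i : Fin r, d (Sum.inl i) : ℕ) : ℤ) - ((∑ j : Fin s, d (Sum.inr j) : ℕ) : ℤ) = 0)
        · omega
      omega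
    rw [f.as_sum]
    exact Submodule.sum_mem _ fun d hd =>
      key m d _ (hdeg d hd).1 (hdeg d hd).2
  · intro hfJ
    have hJI : (Ideal.span
        {p : MvPolynomial (Fin r ⊕ Fin s) ℂ |
          ∃ (i : Fin r) (j : Fin s), p = X (Sum.inl i) * X (Sum.inr j)}) ≤
        (Ideal.span (Set.range (X : Fin r ⊕ Fin s → MvPolynomial (Fin r ⊕ Fin s) ℂ))) ^ 2 := by
      apply Ideal.span_le.2
      rintro _ ⟨i, j, rfl⟩
      rw [sq]
      exact Ideal.mul_mem_mul (Ideal.subset_span ⟨_, rfl⟩) (Ideal.subset_span ⟨_, rfl⟩)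
    have := Ideal.pow_right_mono hJI m
    rw [← pow_mul] at this
    exact this hfJ
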